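/- The set of initial points (x₀,y₀) ∈ ℝ × (-√(11/3), √(11/3)) for which the iterates of T(x,y) = ((9/10)x, (11/10)y - (1/10)y³) converge to (0,0) is exactly the line {(x,0) : x ∈ ℝ} intersected with Ω, and hence has two-dimensional Lebesgue measure zero. -/

import Mathlib

open Filter Topology MeasureTheory

private lemma gd_aux_abs (y : ℝ) (hy : y ^ 2 < 11) :
    |11 / 10 * y - 1 / 10 * y ^ 3| = |y| * (11 - y ^ 2) / 10 := by
  have h1 : 11 / 10 * y - 1 / 10 * y ^ 3 = y * ((11 - y ^ 2) / 10) := by ring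
  rw [h1, abs_mul, abs_of_pos (by linarith : (0:ℝ) < (11 - y ^ 2) / 10)]
  ring

-- invariance: |g y| < s
private lemma gd_aux_inv (s y : ℝ) (hs : s ^ 2 = 11 / 3) (hs0 : 0 < s)
    (hy : |y| < s) : |11 / 10 * y - 1 / 10 * y ^ 3| < s := by
  have hy2 : y ^ 2 < 11 / 3 := by
    have := abs_nonneg y
    nlinarith [sq_abs y]
  rw [gd_aux_abs y (by linarith)]
  set a := |y| with ha
  have ha0 : 0 ≤ a := abs_nonneg y
  have hya : y ^ 2 = a ^ 2 := (sq_abs y).symm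
  rw [hya]
  nlinarith [mul_pos hs0 hs0, sq_nonneg (a - s), sq_nonneg (a + s)]

-- growth: |y| ≤ 1 ⇒ |g y| ≥ |y|
private lemma gd_aux_grow (y : ℝ) (hy : |y| ≤ 1) :
    |y| ≤ |11 / 10 * y - 1 / 10 * y ^ 3| := by
  have hy2 : y ^ 2 ≤ 1 := by nlinarith [sq_abs y, abs_nonneg y]
  rw [gd_aux_abs y (by linarith)]
  nlinarith [abs_nonneg y, sq_abs y]

-- big: 1 < |y| < s ⇒ |g y| > 22/30
private lemma gd_aux_big (s y : ℝ) (hs : s ^ 2 = 11 / 3) (hs0 : 0 < s)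
    (h1 : 1 < |y|) (hy : |y| < s) : 22 / 30 < |11 / 10 * y - 1 / 10 * y ^ 3| := by
  have hy2 : y ^ 2 < 11 / 3 := by nlinarith [sq_abs y, abs_nonneg y]
  rw [gd_aux_abs y (by linarith)]
  nlinarith [sq_abs y]

theorem gd_saddle_basin_is_line_and_null
    (T : ℝ × ℝ → ℝ × ℝ)
    (hT : T = fun p => (9 / 10 * p.1, 11 / 10 * p.2 - 1 / 10 * p.2 ^ 3))
    (Ω : Set (ℝ × ℝ))
    (hΩ : Ω = Set.univ ×ˢ Set.Ioo (-Real.sqrt (11 / 3)) (Real.sqrt (11 / 3))) :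
    {p : ℝ × ℝ | p ∈ Ω ∧ Tendsto (fun n => T^[n] p) atTop (𝓝 ((0 : ℝ), (0 : ℝ)))} =
      {p : ℝ × ℝ | p.2 = 0} ∩ Ω ∧
    volume {p : ℝ × ℝ | p ∈ Ω ∧ Tendsto (fun n => T^[n] p) atTop (𝓝 ((0 : ℝ), (0 : ℝ)))} = 0 := by
  set s := Real.sqrt (11 / 3) with hsdef
  have hs : s ^ 2 = 11 / 3 := Real.sq_sqrt (by norm_num)
  have hs0 : 0 < s := Real.sqrt_pos.mpr (by norm_num)
  set g : ℝ → ℝ := fun y => 11 / 10 * y - 1 / 10 * y ^ 3 with hg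
  -- iterate formula
  have hiter : ∀ (n : ℕ) (p : ℝ × ℝ), T^[n] p = ((9 / 10) ^ n * p.1, g^[n] p.2) := by
    intro n p
    induction n with
    | zero => simp
    | succ n ih =>
      rw [Function.iterate_succ_apply', ih, Function.iterate_succ_apply', hT]
      simp only [hg]
      refine Prod.ext ?_ rfl
      simp
      ring
  -- membership in Ω
  have hmem : ∀ p : ℝ × ℝ, p ∈ Ω ↔ |p.2| < s := by
    intro p
    rw [hΩ]
    simp [abs_lt, and_comm]
  -- key: if y ≠ 0 and |y| < s, iterates of g on y are bounded below
  have hkey : ∀ y : ℝ, y ≠ 0 → |y| < s →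
      ∀ n : ℕ, min |y| (22 / 30) ≤ |g^[n] y| ∧ |g^[n] y| < s := by
    intro y hy0 hys n
    have hc0 : (0:ℝ) < min |y| (22 / 30) :=
      lt_min (abs_pos.mpr hy0) (by norm_num)
    induction n with
    | zero => exact ⟨min_le_left _ _, hys⟩
    | succ n ih =>
      obtain ⟨ih1, ih2⟩ := ih
      rw [Function.iterate_succ_apply']
      constructor
      · rcases le_or_gt |g^[n] y| 1 with h1 | h1
        · exact le_trans ih1 (gd_aux_grow _ h1)
        · exact le_trans (min_le_right _ _)
            (le_of_lt (gd_aux_big s _ hs hs0 h1 ih2))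
      · exact gd_aux_inv s _ hs hs0 ih2
  -- the set equality
  have hset : {p : ℝ × ℝ | p ∈ Ω ∧ Tendsto (fun n => T^[n] p) atTop (𝓝 ((0 : ℝ), (0 : ℝ)))} =
      {p : ℝ × ℝ | p.2 = 0} ∩ Ω := by
    ext p
    simp only [Set.mem_setOf_eq, Set.mem_inter_iff]
    constructor
    · rintro ⟨hpΩ, htend⟩
      refine ⟨?_, hpΩ⟩
      by_contra hy0
      have hys : |p.2| < s := (hmem p).mp hpΩ
      have htend2 : Tendsto (fun n => g^[n] p.2) atTop (𝓝 (0 : ℝ)) := by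
        have := (continuous_snd.tendsto _).comp htend
        simpa [Function.comp_def, hiter] using this
      set c := min |p.2| (22 / 30) with hc
      have hc0 : (0:ℝ) < c := lt_min (abs_pos.mpr hy0) (by norm_num)
      have := (htend2.eventually (Metric.ball_mem_nhds 0 hc0)).exists
      obtain ⟨n, hn⟩ := this
      rw [Real.dist_eq, sub_zero] at hn
      exact absurd hn (not_lt.mpr (hkey p.2 hy0 hys n).1)
    · rintro ⟨hy0, hpΩ⟩
      refine ⟨hpΩ, ?_⟩
      have hg0 : ∀ n, g^[n] p.2 = 0 := by
        intro n
        induction n with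
        | zero => simpa
        | succ n ih => rw [Function.iterate_succ_apply', ih]; simp [hg]
      have h1 : Tendsto (fun n : ℕ => (9 / 10 : ℝ) ^ n * p.1) atTop (𝓝 0) := by
        have := (tendsto_pow_atTop_nhds_zero_of_lt_one (by norm_num : (0:ℝ) ≤ 9/10)
          (by norm_num : (9/10:ℝ) < 1)).mul_const p.1
        simpa using this
      have h2 : Tendsto (fun n : ℕ => g^[n] p.2) atTop (𝓝 (0:ℝ)) := by
        simp only [hg0]; exact tendsto_const_nhds
      have := h1.prodMk_nhds h2
      simpa [hiter] using this
  refine ⟨hset, ?_⟩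
  rw [hset]
  have hline : {p : ℝ × ℝ | p.2 = 0} = Set.univ ×ˢ ({0} : Set ℝ) := by
    ext ⟨a, b⟩; simp [Set.mem_prod, eq_comm]
  refine measure_mono_null Set.inter_subset_left ?_
  rw [hline, Measure.volume_eq_prod, Measure.prod_prod]
  simp
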